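/- Let {P_n} and {Q_n} be the monic OPS of regular functionals 𝒰 and 𝒱, related by φ(x)𝒰 = ρ(x)𝒱 with deg φ = ȷ and deg ρ = r. Then for every n ≥ r, φ(x)·Q_n(x) = Σ_{i=n-r}^{n+ȷ} ξ_i P_i(x) for some constants ξ_i; that is, the Fourier coefficients of φ·Q_n relative to {P_i} vanish for i ≤ n - r - 1. -/

import Mathlib

open Polynomial Finset

noncomputable def Dw (ω : ℂ) : Polynomial ℂ →ₗ[ℂ] Polynomial ℂ where
  toFun p := C ω⁻¹ * (p.comp (X + C ω) - p)
  map_add' p r := by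
    ext n
    simp [add_comp, coeff_C_mul, coeff_sub, coeff_add]
    ring
  map_smul' c p := by
    ext n
    simp [smul_comp, coeff_C_mul, coeff_smul, coeff_sub, smul_eq_mul]
    ring

noncomputable def Dq (q : ℂ) : Polynomial ℂ →ₗ[ℂ] Polynomial ℂ where
  toFun p := C (q-1)⁻¹ * (p.comp (C q * X) - p).divX
  map_add' p r := by
    ext n
    simp [add_comp, coeff_divX, coeff_C_mul, coeff_sub, coeff_add]
    ring
  map_smul' c p := by
    ext n
    simp [smul_comp, coeff_divX, coeff_C_mul, coeff_smul, coeff_sub, smul_eq_mul]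
    ring

noncomputable def mulF (π : Polynomial ℂ) (U : Polynomial ℂ →ₗ[ℂ] ℂ) : Polynomial ℂ →ₗ[ℂ] ℂ :=
  U ∘ₗ (LinearMap.mulLeft ℂ π)

noncomputable def DwF (ω : ℂ) (U : Polynomial ℂ →ₗ[ℂ] ℂ) : Polynomial ℂ →ₗ[ℂ] ℂ :=
  -(U ∘ₗ Dw (-ω))

noncomputable def DqF (q : ℂ) (U : Polynomial ℂ →ₗ[ℂ] ℂ) : Polynomial ℂ →ₗ[ℂ] ℂ :=
  -(U ∘ₗ Dq q⁻¹)

/-- Any polynomial of degree ≤ N is a linear combination of the monic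
polynomials `P 0, …, P N` when `P i` has degree `i`. -/
lemma span_lemma (P : ℕ → Polynomial ℂ) (hm : ∀ n, (P n).Monic)
    (hd : ∀ n, (P n).natDegree = n) :
    ∀ N (p : Polynomial ℂ), p.natDegree ≤ N →
      ∃ c : ℕ → ℂ, p = ∑ i ∈ range (N + 1), c i • P i := by
  intro N
  induction N with
  | zero =>
    intro p hp
    have hP0 : P 0 = 1 := by
      have h1 : P 0 = C ((P 0).coeff 0) := eq_C_of_natDegree_le_zero (by simp [hd 0])
      have h2 : (P 0).coeff 0 = 1 := by
        have := hm 0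
        rwa [Monic, leadingCoeff, hd 0] at this
      rw [h1, h2, map_one]
    refine ⟨fun _ => p.coeff 0, ?_⟩
    rw [eq_C_of_natDegree_le_zero hp]
    simp [hP0, Polynomial.smul_eq_C_mul]
  | succ N ih =>
    intro p hp
    set q := p - p.coeff (N + 1) • P (N + 1) with hq
    have hqdeg : q.natDegree ≤ N := by
      rw [natDegree_le_iff_coeff_eq_zero]
      intro m hm'
      rcases eq_or_lt_of_le (Nat.succ_le_of_lt hm') with h | h
      · have hc : (P (N + 1)).coeff (N + 1) = 1 := by
          have := hm (N + 1)
          rwa [Monic, leadingCoeff, hd (N + 1)] at this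
        simp [hq, ← h, hc]
      · have h1 : p.coeff m = 0 := coeff_eq_zero_of_natDegree_lt (lt_of_le_of_lt hp h)
        have h2 : (P (N + 1)).coeff m = 0 :=
          coeff_eq_zero_of_natDegree_lt (by rw [hd]; exact h)
        simp [hq, h1, h2]
    obtain ⟨c, hc⟩ := ih q hqdeg
    refine ⟨fun i => if i = N + 1 then p.coeff (N + 1) else c i, ?_⟩
    rw [Finset.sum_range_succ]
    beta_reduce
    rw [if_pos rfl,
      show (∑ i ∈ range (N + 1), (if i = N + 1 then p.coeff (N + 1) else c i) • P i)
          = ∑ i ∈ range (N + 1), c i • P i from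
        Finset.sum_congr rfl (fun i hi => by
          rw [if_neg (Nat.ne_of_lt (Finset.mem_range.mp hi))]),
      ← hc, hq]
    ring

/-- Extracting a Fourier coefficient via orthogonality. -/
lemma coeff_extract (U : Polynomial ℂ →ₗ[ℂ] ℂ) (P : ℕ → Polynomial ℂ)
    (hPorth : ∀ n k, n ≠ k → U (P n * P k) = 0)
    (c : ℕ → ℂ) (M k : ℕ) (hk : k < M) :
    U ((∑ i ∈ range M, c i • P i) * P k) = c k * U (P k * P k) := by
  rw [Finset.sum_mul, map_sum]
  rw [Finset.sum_eq_single k]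
  · rw [smul_mul_assoc, map_smul, smul_eq_mul]
  · intro i hi hik
    rw [smul_mul_assoc, map_smul, hPorth i k hik, smul_zero]
  · intro h
    exact absurd (Finset.mem_range.mpr hk) h

/-- if the regular functionals 𝒰, 𝒱 with monic OPS {Pₙ}, {Qₙ} satisfy
φ𝒰 = ρ𝒱 with deg φ = j and deg ρ = r, then for every n ≥ r,
φ·Qₙ = Σ_{i=n-r}^{n+j} ξᵢ Pᵢ for some constants ξᵢ. -/
theorem stmt17 (U V : Polynomial ℂ →ₗ[ℂ] ℂ) (P Q : ℕ → Polynomial ℂ)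
    (hPmonic : ∀ n, (P n).Monic) (hPdeg : ∀ n, (P n).natDegree = n)
    (hPorth : ∀ n k, n ≠ k → U (P n * P k) = 0) (hPreg : ∀ n, U (P n * P n) ≠ 0)
    (hQmonic : ∀ n, (Q n).Monic) (hQdeg : ∀ n, (Q n).natDegree = n)
    (hQorth : ∀ n k, n ≠ k → V (Q n * Q k) = 0) (hQreg : ∀ n, V (Q n * Q n) ≠ 0)
    (φ ρ : Polynomial ℂ) (hφ : φ ≠ 0) (hρ : ρ ≠ 0) (jdeg rdeg : ℕ)
    (hφdeg : φ.natDegree = jdeg) (hρdeg : ρ.natDegree = rdeg)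
    (hUV : mulF φ U = mulF ρ V) :
    ∀ n : ℕ, rdeg ≤ n → ∃ ξ : ℕ → ℂ,
      φ * Q n = ∑ i ∈ Finset.Icc (n - rdeg) (n + jdeg), ξ i • P i := by
  intro n hn
  have hQn : Q n ≠ 0 := (hQmonic n).ne_zero
  -- expand φ * Q n in the basis P
  have hdeg : (φ * Q n).natDegree ≤ n + jdeg := by
    rw [natDegree_mul hφ hQn, hφdeg, hQdeg]; omega
  obtain ⟨c, hc⟩ := span_lemma P hPmonic hPdeg (n + jdeg) (φ * Q n) hdeg
  -- vanishing of low coefficients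
  have hvanish : ∀ i, i < n - rdeg → c i = 0 := by
    intro i hi
    have hiR : i + rdeg < n := by omega
    -- U(φ Q n P i) = V(ρ Q n P i) = V(Q n * (ρ P i))
    have key : U (φ * (Q n * P i)) = V (Q n * (ρ * P i)) := by
      have h1 : U (φ * (Q n * P i)) = mulF φ U (Q n * P i) := rfl
      have h2 : mulF ρ V (Q n * P i) = V (ρ * (Q n * P i)) := rfl
      rw [h1, hUV, h2]
      ring_nf
    -- expand ρ * P i in the basis Q up to degree n - 1
    have hρPdeg : (ρ * P i).natDegree ≤ n - 1 := by
      rw [natDegree_mul hρ (hPmonic i).ne_zero, hρdeg, hPdeg]; omega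
    obtain ⟨d, hd⟩ := span_lemma Q hQmonic hQdeg (n - 1) (ρ * P i) hρPdeg
    have hzero : V (Q n * (ρ * P i)) = 0 := by
      rw [hd, Finset.mul_sum, map_sum]
      apply Finset.sum_eq_zero
      intro k hk
      rw [mul_smul_comm, map_smul, hQorth n k (by
        have := Finset.mem_range.mp hk; omega), smul_zero]
    -- extract coefficient
    have hext : U ((φ * Q n) * P i) = c i * U (P i * P i) := by
      rw [hc]
      exact coeff_extract U P hPorth c (n + jdeg + 1) i (by omega)
    have : c i * U (P i * P i) = 0 := by
      rw [← hext, mul_assoc, key, hzero]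
    exact (mul_eq_zero.mp this).resolve_right (hPreg i)
  refine ⟨c, ?_⟩
  rw [hc]
  symm
  apply Finset.sum_subset
  · intro x hx
    rw [Finset.mem_Icc] at hx
    rw [Finset.mem_range]
    omega
  · intro x hx hnx
    rw [Finset.mem_range] at hx
    rw [Finset.mem_Icc] at hnx
    have : x < n - rdeg := by omega
    rw [hvanish x this, zero_smul]
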